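/- arXiv:1906.07695 — 2 statements merged into one kernel-verified Lean document; each statement's English description precedes it below -/
import Mathlib

section
/- Let α := ∫_{[0,1]^d} r(x)·Φ(x) dx and define the estimator α̂ := (1/n)·Σ_{i=1}^n Y_i²·Φ(X_i) − ∫_{[0,1]^d} g(x)²·Φ(x) dx. Then E[(α̂ − α)²] ≤ 8·(E[U⁴]·‖f‖_∞⁴ + ‖g‖_∞⁴)·(∫_{[0,1]^d} Φ(x)² dx)/n. (This is the first inequality of Lemma 2 of the paper under assumption set H2, stated for a general bounded coefficient function Φ.) -/
open MeasureTheory ProbabilityTheory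

private lemma pow4_add_le (a b : ℝ) : (a + b) ^ 4 ≤ 8 * (a ^ 4 + b ^ 4) := by
  nlinarith [sq_nonneg (a - b), sq_nonneg (a + b), sq_nonneg (a ^ 2 - b ^ 2),
    sq_nonneg (a ^ 2 + b ^ 2), sq_nonneg (a * b), sq_nonneg a, sq_nonneg b]

private lemma pow4_mul_bound {a b A B : ℝ} (u : ℝ) (hA : |a| ≤ A) (hB : |b| ≤ B) :
    (a * u + b) ^ 4 ≤ 8 * (A ^ 4 * u ^ 4 + B ^ 4) := by
  have h1 := pow4_add_le (a * u) b
  have ha : a ^ 4 ≤ A ^ 4 := by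
    calc a ^ 4 = |a| ^ 4 := by
          rw [← abs_pow, abs_of_nonneg (by positivity : (0:ℝ) ≤ a ^ 4)]
      _ ≤ A ^ 4 := pow_le_pow_left₀ (abs_nonneg a) hA 4
  have hb : b ^ 4 ≤ B ^ 4 := by
    calc b ^ 4 = |b| ^ 4 := by
          rw [← abs_pow, abs_of_nonneg (by positivity : (0:ℝ) ≤ b ^ 4)]
      _ ≤ B ^ 4 := pow_le_pow_left₀ (abs_nonneg b) hB 4
  have hu : (0:ℝ) ≤ u ^ 4 := by positivity
  calc (a * u + b) ^ 4 ≤ 8 * ((a * u) ^ 4 + b ^ 4) := h1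
    _ = 8 * (a ^ 4 * u ^ 4 + b ^ 4) := by ring
    _ ≤ 8 * (A ^ 4 * u ^ 4 + B ^ 4) := by
        nlinarith [mul_le_mul_of_nonneg_right ha hu]

/-- first inequality of Lemma 2 of the paper, assumption set H2.
With `V = g(X)`, `α = ∫ r Φ` and `α̂ = (1/n) Σᵢ Yᵢ² Φ(Xᵢ) − ∫ g² Φ`, one has
`E[(α̂ − α)²] ≤ 8 (E[U⁴] ‖f‖_∞⁴ + ‖g‖_∞⁴) (∫ Φ²) / n`. -/
theorem linear_coefficient_MSE_H2
    {Ω : Type*} [MeasurableSpace Ω] (P : Measure Ω) [IsProbabilityMeasure P]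
    (d : ℕ) (hd : 1 ≤ d)
    (X : Ω → (Fin d → ℝ)) (U : Ω → ℝ)
    (hXm : Measurable X) (hUm : Measurable U)
    -- X is uniformly distributed on the cube [0,1]^d
    (hXlaw : Measure.map X P = volume.restrict (Set.Icc (0 : Fin d → ℝ) 1))
    -- U independent of X, E[U] = 0, E[U²] = 1, E[U⁴] < ∞
    (hXU : IndepFun X U P)
    (hUint : Integrable U P) (hUmean : ∫ ω, U ω ∂P = 0)
    (hU2int : Integrable (fun ω => (U ω) ^ 2) P)
    (hU2 : ∫ ω, (U ω) ^ 2 ∂P = 1)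
    (hU4 : Integrable (fun ω => (U ω) ^ 4) P)
    -- f, g bounded measurable on the cube, r = f²
    (f g : (Fin d → ℝ) → ℝ) (hfm : Measurable f) (hgm : Measurable g)
    (Cf : ℝ) (hf : ∀ x ∈ Set.Icc (0 : Fin d → ℝ) 1, |f x| ≤ Cf)
    (Cg : ℝ) (hg : ∀ x ∈ Set.Icc (0 : Fin d → ℝ) 1, |g x| ≤ Cg)
    (r : (Fin d → ℝ) → ℝ) (hr : ∀ x, r x = (f x) ^ 2)
    -- the i.i.d. copies (Xᵢ, Uᵢ), i = 1,…,n, of (X, U), and Yᵢ = f(Xᵢ)Uᵢ + g(Xᵢ)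
    (n : ℕ) (hn : 1 ≤ n)
    (Xs : Fin n → Ω → (Fin d → ℝ)) (Us : Fin n → Ω → ℝ)
    (hXsm : ∀ i, Measurable (Xs i)) (hUsm : ∀ i, Measurable (Us i))
    (hiid : iIndepFun (fun i ω => (Xs i ω, Us i ω)) P)
    (hident : ∀ i, IdentDistrib (fun ω => (Xs i ω, Us i ω))
      (fun ω => (X ω, U ω)) P P)
    -- Φ bounded measurable on the cube
    (Φ : (Fin d → ℝ) → ℝ) (hΦm : Measurable Φ)
    (CΦ : ℝ) (hΦ : ∀ x ∈ Set.Icc (0 : Fin d → ℝ) 1, |Φ x| ≤ CΦ) :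
    ∫ ω, ((1 / (n : ℝ)) * (∑ i, (f (Xs i ω) * Us i ω + g (Xs i ω)) ^ 2 * Φ (Xs i ω))
            - (∫ x in Set.Icc (0 : Fin d → ℝ) 1, (g x) ^ 2 * Φ x)
            - ∫ x in Set.Icc (0 : Fin d → ℝ) 1, r x * Φ x) ^ 2 ∂P
      ≤ 8 * ((∫ ω, (U ω) ^ 4 ∂P) * (⨆ x : (Set.Icc (0 : Fin d → ℝ) 1), |f x.1|) ^ 4
              + (⨆ x : (Set.Icc (0 : Fin d → ℝ) 1), |g x.1|) ^ 4)
          * (∫ x in Set.Icc (0 : Fin d → ℝ) 1, (Φ x) ^ 2) / n := by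
  classical
  have hn1 : (1:ℝ) ≤ (n:ℝ) := by exact_mod_cast hn
  have hn0 : (0:ℝ) < (n:ℝ) := lt_of_lt_of_le zero_lt_one hn1
  have hn' : (n:ℝ) ≠ 0 := ne_of_gt hn0
  have h01 : (0 : Fin d → ℝ) ∈ Set.Icc (0 : Fin d → ℝ) 1 := by
    refine ⟨le_rfl, fun i => zero_le_one⟩
  have hCf0 : 0 ≤ Cf := (abs_nonneg _).trans (hf 0 h01)
  have hCg0 : 0 ≤ Cg := (abs_nonneg _).trans (hg 0 h01)
  have hCΦ0 : 0 ≤ CΦ := (abs_nonneg _).trans (hΦ 0 h01)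
  set F := ⨆ x : (Set.Icc (0 : Fin d → ℝ) 1), |f x.1| with hFdef
  set G := ⨆ x : (Set.Icc (0 : Fin d → ℝ) 1), |g x.1| with hGdef
  set c1 : ℝ := ∫ x in Set.Icc (0 : Fin d → ℝ) 1, (g x) ^ 2 * Φ x with hc1
  set c2 : ℝ := ∫ x in Set.Icc (0 : Fin d → ℝ) 1, r x * Φ x with hc2
  have hFbdd : BddAbove (Set.range fun x : (Set.Icc (0 : Fin d → ℝ) 1) => |f x.1|) :=
    ⟨Cf, by rintro y ⟨x, rfl⟩; exact hf x.1 x.2⟩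
  have hGbdd : BddAbove (Set.range fun x : (Set.Icc (0 : Fin d → ℝ) 1) => |g x.1|) :=
    ⟨Cg, by rintro y ⟨x, rfl⟩; exact hg x.1 x.2⟩
  have hfF : ∀ x ∈ Set.Icc (0 : Fin d → ℝ) 1, |f x| ≤ F := fun x hx =>
    le_ciSup hFbdd (⟨x, hx⟩ : Set.Icc (0 : Fin d → ℝ) 1)
  have hgG : ∀ x ∈ Set.Icc (0 : Fin d → ℝ) 1, |g x| ≤ G := fun x hx =>
    le_ciSup hGbdd (⟨x, hx⟩ : Set.Icc (0 : Fin d → ℝ) 1)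
  -- a.e. the sample lies in the cube
  have haeX : ∀ᵐ ω ∂P, X ω ∈ Set.Icc (0 : Fin d → ℝ) 1 := by
    have h1 : P (X ⁻¹' Set.Icc (0 : Fin d → ℝ) 1) = 1 := by
      rw [← Measure.map_apply hXm measurableSet_Icc, hXlaw,
        Measure.restrict_apply measurableSet_Icc, Set.inter_self, Real.volume_Icc_pi]
      simp
    have h2 : P (X ⁻¹' Set.Icc (0 : Fin d → ℝ) 1)ᶜ = 0 :=
      (prob_compl_eq_zero_iff (hXm measurableSet_Icc)).2 h1
    rw [ae_iff]
    convert h2 using 2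
    rfl
  -- the common summand function
  set h : (Fin d → ℝ) × ℝ → ℝ := fun p => (f p.1 * p.2 + g p.1) ^ 2 * Φ p.1 with hhdef
  have hhm : Measurable h :=
    ((((hfm.comp measurable_fst).mul measurable_snd).add
      (hgm.comp measurable_fst)).pow_const 2).mul (hΦm.comp measurable_fst)
  set Z : Ω → ℝ := fun ω => h (X ω, U ω) with hZdef
  have hZm : Measurable Z := hhm.comp (hXm.prodMk hUm)
  set Zs : Fin n → Ω → ℝ := fun i => h ∘ (fun ω => (Xs i ω, Us i ω)) with hZsdef
  have hZsm : ∀ i, Measurable (Zs i) := fun i => hhm.comp ((hXsm i).prodMk (hUsm i))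
  have hZident : ∀ i, IdentDistrib (Zs i) Z P P := fun i => (hident i).comp hhm
  set m : ℝ := ∫ ω, Z ω ∂P with hm
  -- integrability of bounded functions of X
  have hintX : ∀ (q : (Fin d → ℝ) → ℝ) (c : ℝ), Measurable q →
      (∀ x ∈ Set.Icc (0 : Fin d → ℝ) 1, |q x| ≤ c) →
      Integrable (fun ω => q (X ω)) P := by
    intro q c hq hqc
    refine Integrable.mono' (integrable_const c) (hq.comp hXm).aestronglyMeasurable ?_
    filter_upwards [haeX] with ω hω
    simpa [Real.norm_eq_abs] using hqc _ hω
  -- the mean of Z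
  have hA : Integrable (fun ω => (f (X ω)) ^ 2 * Φ (X ω)) P := by
    refine hintX _ (Cf ^ 2 * CΦ) ((hfm.pow_const 2).mul hΦm) (fun x hx => ?_)
    simp only [Pi.mul_apply]
    rw [abs_mul, abs_pow]
    exact mul_le_mul (pow_le_pow_left₀ (abs_nonneg _) (hf x hx) 2) (hΦ x hx)
      (abs_nonneg _) (by positivity)
  have hB : Integrable (fun ω => 2 * (f (X ω) * g (X ω) * Φ (X ω))) P := by
    refine hintX _ (2 * (Cf * Cg * CΦ)) (((hfm.mul hgm).mul hΦm).const_mul 2)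
      (fun x hx => ?_)
    simp only [Pi.mul_apply]
    rw [abs_mul, abs_mul, abs_mul]
    have h2 : |(2:ℝ)| = 2 := by norm_num
    rw [h2]
    refine mul_le_mul_of_nonneg_left ?_ (by norm_num)
    exact mul_le_mul (mul_le_mul (hf x hx) (hg x hx) (abs_nonneg _) hCf0)
      (hΦ x hx) (abs_nonneg _) (by positivity)
  have hC : Integrable (fun ω => (g (X ω)) ^ 2 * Φ (X ω)) P := by
    refine hintX _ (Cg ^ 2 * CΦ) ((hgm.pow_const 2).mul hΦm) (fun x hx => ?_)
    simp only [Pi.mul_apply]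
    rw [abs_mul, abs_pow]
    exact mul_le_mul (pow_le_pow_left₀ (abs_nonneg _) (hg x hx) 2) (hΦ x hx)
      (abs_nonneg _) (by positivity)
  have hindA : IndepFun (fun ω => (f (X ω)) ^ 2 * Φ (X ω)) (fun ω => (U ω) ^ 2) P :=
    hXU.comp ((hfm.pow_const 2).mul hΦm) (measurable_id.pow_const 2)
  have hindB : IndepFun (fun ω => 2 * (f (X ω) * g (X ω) * Φ (X ω))) U P :=
    hXU.comp (((hfm.mul hgm).mul hΦm).const_mul 2) measurable_id
  have hAU2 : Integrable (fun ω => (f (X ω)) ^ 2 * Φ (X ω) * (U ω) ^ 2) P :=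
    hindA.integrable_mul hA hU2int
  have hBU : Integrable (fun ω => 2 * (f (X ω) * g (X ω) * Φ (X ω)) * U ω) P :=
    hindB.integrable_mul hB hUint
  have eA : ∫ ω, (f (X ω)) ^ 2 * Φ (X ω) * (U ω) ^ 2 ∂P
      = (∫ ω, (f (X ω)) ^ 2 * Φ (X ω) ∂P) * ∫ ω, (U ω) ^ 2 ∂P :=
    hindA.integral_fun_mul_eq_mul_integral hA.aestronglyMeasurable hU2int.aestronglyMeasurable
  have eB : ∫ ω, 2 * (f (X ω) * g (X ω) * Φ (X ω)) * U ω ∂P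
      = (∫ ω, 2 * (f (X ω) * g (X ω) * Φ (X ω)) ∂P) * ∫ ω, U ω ∂P :=
    hindB.integral_fun_mul_eq_mul_integral hB.aestronglyMeasurable hUint.aestronglyMeasurable
  have hmapA : ∫ ω, (f (X ω)) ^ 2 * Φ (X ω) ∂P = c2 := by
    rw [hc2]
    have : (∫ x in Set.Icc (0 : Fin d → ℝ) 1, r x * Φ x)
        = ∫ x in Set.Icc (0 : Fin d → ℝ) 1, (f x) ^ 2 * Φ x := by
      simp only [hr]
    rw [this, ← hXlaw,
      integral_map hXm.aemeasurable (f := fun x => (f x) ^ 2 * Φ x) ((hfm.pow_const 2).mul hΦm).aestronglyMeasurable]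
  have hmapC : ∫ ω, (g (X ω)) ^ 2 * Φ (X ω) ∂P = c1 := by
    rw [hc1, ← hXlaw,
      integral_map hXm.aemeasurable (f := fun x => (g x) ^ 2 * Φ x) ((hgm.pow_const 2).mul hΦm).aestronglyMeasurable]
  have hmean : m = c1 + c2 := by
    have hZexp : ∀ ω, Z ω = (f (X ω)) ^ 2 * Φ (X ω) * (U ω) ^ 2
        + (2 * (f (X ω) * g (X ω) * Φ (X ω)) * U ω + (g (X ω)) ^ 2 * Φ (X ω)) :=
      fun ω => by simp only [hZdef, hhdef]; ring
    rw [hm]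
    calc ∫ ω, Z ω ∂P
        = ∫ ω, ((f (X ω)) ^ 2 * Φ (X ω) * (U ω) ^ 2
            + (2 * (f (X ω) * g (X ω) * Φ (X ω)) * U ω + (g (X ω)) ^ 2 * Φ (X ω))) ∂P :=
          integral_congr_ae (Filter.Eventually.of_forall hZexp)
      _ = (∫ ω, (f (X ω)) ^ 2 * Φ (X ω) * (U ω) ^ 2 ∂P)
            + ((∫ ω, 2 * (f (X ω) * g (X ω) * Φ (X ω)) * U ω ∂P)
              + ∫ ω, (g (X ω)) ^ 2 * Φ (X ω) ∂P) := by
          have hBC : Integrable (fun ω => 2 * (f (X ω) * g (X ω) * Φ (X ω)) * U ω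
              + (g (X ω)) ^ 2 * Φ (X ω)) P := hBU.add hC
          rw [integral_add hAU2 hBC, integral_add hBU hC]
      _ = c1 + c2 := by
          rw [eA, eB, hU2, hUmean, hmapA, hmapC]; ring
  -- second moment bound and Memℒp
  have hZsq : ∀ ω, (Z ω) ^ 2 = (f (X ω) * U ω + g (X ω)) ^ 4 * (Φ (X ω)) ^ 2 :=
    fun ω => by simp only [hZdef, hhdef]; ring
  have hintZsq : Integrable (fun ω => (Z ω) ^ 2) P := by
    refine Integrable.mono' ((((hU4.const_mul (Cf ^ 4)).add
      (integrable_const (Cg ^ 4))).const_mul 8).const_mul (CΦ ^ 2))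
      (hZm.pow_const 2).aestronglyMeasurable ?_
    filter_upwards [haeX] with ω hω
    have h4 := pow4_mul_bound (U ω) (hf _ hω) (hg _ hω)
    have hφ2 : (Φ (X ω)) ^ 2 ≤ CΦ ^ 2 := by
      have h1 := hΦ _ hω
      nlinarith [abs_nonneg (Φ (X ω)), sq_abs (Φ (X ω))]
    rw [Real.norm_eq_abs, abs_of_nonneg (sq_nonneg _), hZsq]
    calc (f (X ω) * U ω + g (X ω)) ^ 4 * (Φ (X ω)) ^ 2
        ≤ (8 * (Cf ^ 4 * (U ω) ^ 4 + Cg ^ 4)) * (CΦ ^ 2) := by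
          refine mul_le_mul h4 hφ2 (sq_nonneg _) ?_
          positivity
      _ = CΦ ^ 2 * (8 * (Cf ^ 4 * (U ω) ^ 4 + Cg ^ 4)) := by ring
  have hZL2 : MemLp Z 2 P := (memLp_two_iff_integrable_sq hZm.aestronglyMeasurable).2 hintZsq
  have hZsL2 : ∀ i, MemLp (Zs i) 2 P := fun i => (hZident i).symm.memLp_snd hZL2
  have hZsInt : ∀ i, Integrable (Zs i) P := fun i => (hZsL2 i).integrable one_le_two
  -- the bound on E[Z²]
  have hΦ2int : Integrable (fun ω => (Φ (X ω)) ^ 2) P := by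
    refine hintX _ (CΦ ^ 2) (hΦm.pow_const 2) (fun x hx => ?_)
    rw [abs_pow]
    exact pow_le_pow_left₀ (abs_nonneg _) (hΦ x hx) 2
  have humeas : Measurable (fun u : ℝ => 8 * (F ^ 4 * u ^ 4 + G ^ 4)) :=
    (((measurable_id.pow_const 4).const_mul (F ^ 4)).add_const (G ^ 4)).const_mul 8
  have hLint : Integrable (fun ω => 8 * (F ^ 4 * (U ω) ^ 4 + G ^ 4)) P :=
    ((hU4.const_mul (F ^ 4)).add (integrable_const (G ^ 4))).const_mul 8
  have hindR : IndepFun (fun ω => 8 * (F ^ 4 * (U ω) ^ 4 + G ^ 4))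
      (fun ω => (Φ (X ω)) ^ 2) P :=
    hXU.symm.comp humeas (hΦm.pow_const 2)
  have hmapΦ : ∫ ω, (Φ (X ω)) ^ 2 ∂P = ∫ x in Set.Icc (0 : Fin d → ℝ) 1, (Φ x) ^ 2 := by
    rw [← hXlaw, integral_map hXm.aemeasurable (hΦm.pow_const 2).aestronglyMeasurable]
  have hE2 : ∫ ω, (Z ω) ^ 2 ∂P
      ≤ 8 * ((∫ ω, (U ω) ^ 4 ∂P) * F ^ 4 + G ^ 4)
          * ∫ x in Set.Icc (0 : Fin d → ℝ) 1, (Φ x) ^ 2 := by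
    have hRint : Integrable (fun ω => 8 * (F ^ 4 * (U ω) ^ 4 + G ^ 4) * (Φ (X ω)) ^ 2) P :=
      hindR.integrable_mul hLint hΦ2int
    have hdom : ∀ᵐ ω ∂P, (Z ω) ^ 2 ≤ 8 * (F ^ 4 * (U ω) ^ 4 + G ^ 4) * (Φ (X ω)) ^ 2 := by
      filter_upwards [haeX] with ω hω
      rw [hZsq]
      exact mul_le_mul_of_nonneg_right (pow4_mul_bound (U ω) (hfF _ hω) (hgG _ hω))
        (sq_nonneg _)
    have eR : ∫ ω, 8 * (F ^ 4 * (U ω) ^ 4 + G ^ 4) * (Φ (X ω)) ^ 2 ∂P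
        = (∫ ω, 8 * (F ^ 4 * (U ω) ^ 4 + G ^ 4) ∂P) * ∫ ω, (Φ (X ω)) ^ 2 ∂P :=
      hindR.integral_fun_mul_eq_mul_integral hLint.aestronglyMeasurable hΦ2int.aestronglyMeasurable
    have eL : ∫ ω, 8 * (F ^ 4 * (U ω) ^ 4 + G ^ 4) ∂P
        = 8 * (F ^ 4 * (∫ ω, (U ω) ^ 4 ∂P) + G ^ 4) := by
      rw [integral_const_mul, integral_add (hU4.const_mul (F ^ 4)) (integrable_const (G ^ 4)),
        integral_const_mul, integral_const]
      simp [measure_univ]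
    calc ∫ ω, (Z ω) ^ 2 ∂P
        ≤ ∫ ω, 8 * (F ^ 4 * (U ω) ^ 4 + G ^ 4) * (Φ (X ω)) ^ 2 ∂P :=
          integral_mono_ae hintZsq hRint hdom
      _ = 8 * ((∫ ω, (U ω) ^ 4 ∂P) * F ^ 4 + G ^ 4)
            * ∫ x in Set.Icc (0 : Fin d → ℝ) 1, (Φ x) ^ 2 := by
          rw [eR, eL, hmapΦ]; ring
  -- independence and variance of the sum
  have hZsiid := hiid.comp (fun _ => h) (fun _ => hhm)
  have hpair : Set.Pairwise ↑(Finset.univ : Finset (Fin n))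
      (fun i j => IndepFun (Zs i) (Zs j) P) := fun i _ j _ hij => hZsiid.indepFun hij
  have hvarsum : variance (∑ i, Zs i) P = n * variance Z P := by
    rw [IndepFun.variance_sum (fun i _ => hZsL2 i) hpair]
    rw [Finset.sum_congr rfl (fun i _ => (hZident i).variance_eq), Finset.sum_const,
      Finset.card_univ, Fintype.card_fin, nsmul_eq_mul]
  have hES : ∫ ω, (∑ i, Zs i) ω ∂P = n * m := by
    simp only [Finset.sum_apply]
    rw [integral_finset_sum Finset.univ (fun i _ => hZsInt i)]
    rw [Finset.sum_congr rfl (fun i _ => (hZident i).integral_eq), Finset.sum_const,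
      Finset.card_univ, Fintype.card_fin, nsmul_eq_mul]
  have hSL2 : MemLp (∑ i, Zs i) 2 P := memLp_finsetSum' _ (fun i _ => hZsL2 i)
  -- rewrite the LHS as a variance
  have hLHS : ∫ ω, ((1 / (n : ℝ)) *
        (∑ i, (f (Xs i ω) * Us i ω + g (Xs i ω)) ^ 2 * Φ (Xs i ω)) - c1 - c2) ^ 2 ∂P
      = (1 / (n : ℝ) ^ 2) * variance (∑ i, Zs i) P := by
    rw [variance_eq_integral hSL2.aestronglyMeasurable.aemeasurable]
    rw [hES, ← integral_const_mul]
    refine integral_congr_ae (Filter.Eventually.of_forall fun ω => ?_)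
    simp only [Finset.sum_apply, hZsdef, hhdef, Function.comp_apply, hmean]
    field_simp
    ring
  -- put everything together
  calc ∫ ω, ((1 / (n : ℝ)) *
        (∑ i, (f (Xs i ω) * Us i ω + g (Xs i ω)) ^ 2 * Φ (Xs i ω)) - c1 - c2) ^ 2 ∂P
      = (1 / (n : ℝ) ^ 2) * variance (∑ i, Zs i) P := hLHS
    _ = variance Z P / n := by rw [hvarsum]; field_simp
    _ ≤ (∫ ω, (Z ω) ^ 2 ∂P) / n := by
        have hv : variance Z P ≤ ∫ ω, (Z ω) ^ 2 ∂P := by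
          simpa [Pi.pow_apply] using variance_le_expectation_sq (μ := P)
            hZm.aestronglyMeasurable
        gcongr
    _ ≤ 8 * ((∫ ω, (U ω) ^ 4 ∂P) * F ^ 4 + G ^ 4)
          * (∫ x in Set.Icc (0 : Fin d → ℝ) 1, (Φ x) ^ 2) / n := by
        gcongr
end

section
/- Let w := ∫_{[0,1]^d} g(x)²·Ψ(x) dx and β := ∫_{[0,1]^d} r(x)·Ψ(x) dx. For n ≥ 3 set ρ_n := √(n/ln n), K_i := Y_i²·Ψ(X_i) − w, and define the truncated estimator β̂ := (1/n)·Σ_{i=1}^n K_i·1_{{|K_i| ≤ ρ_n}}. Then, with M := 16·(E[U⁴]·‖f‖_∞⁴ + ‖g‖_∞⁴)·∫_{[0,1]^d} Ψ(x)² dx + 2·‖g‖_∞⁴·(∫_{[0,1]^d} |Ψ(x)| dx)², one has E[(β̂ − β)²] ≤ (M + M²)·(ln n)/n. (This is the second inequality of Lemma 2 of the paper under assumption set H2, stated for a general bounded coefficient function Ψ.) -/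
open MeasureTheory ProbabilityTheory

lemma four_bound (x y : ℝ) : (x+y)^4 ≤ 8*x^4+8*y^4 := by
  nlinarith [sq_nonneg (x-y), sq_nonneg (x+y), sq_nonneg (x^2-y^2), sq_nonneg (x^2+y^2),
    sq_nonneg (x*y), sq_nonneg x, sq_nonneg y]

lemma quartic_bound (a b F G u : ℝ) (ha : |a| ≤ F) (hb : |b| ≤ G) :
    (a*u+b)^4 ≤ 8*(F^4*u^4 + G^4) := by
  have h4 : ∀ c C : ℝ, |c| ≤ C → c^4 ≤ C^4 := by
    intro c C hc
    calc c^4 ≤ |c^4| := le_abs_self _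
    _ = |c|^4 := (abs_pow c 4)
    _ ≤ C^4 := pow_le_pow_left₀ (abs_nonneg c) hc 4
  have hu : (0:ℝ) ≤ u^4 := by positivity
  have := four_bound (a*u) b
  nlinarith [h4 a F ha, h4 b G hb, mul_le_mul_of_nonneg_right (h4 a F ha) hu]

lemma abs_le_one_add_sq (a : ℝ) : |a| ≤ 1 + a^2 := by
  nlinarith [sq_nonneg (|a| - 1), sq_abs a, abs_nonneg a]

lemma sq_le_of_abs_le {c C : ℝ} (h : |c| ≤ C) : c^2 ≤ C^2 := by
  rw [← sq_abs]; exact pow_le_pow_left₀ (abs_nonneg c) h 2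

lemma sqprod_bound {a b A B : ℝ} (ha : |a| ≤ A) (hb : |b| ≤ B) : |a^2*b| ≤ A^2*B := by
  rw [abs_mul, abs_pow]
  exact mul_le_mul (pow_le_pow_left₀ (abs_nonneg a) ha 2) hb (abs_nonneg b) (by positivity)

lemma trip_bound {a b c A B C : ℝ} (ha : |a| ≤ A) (hb : |b| ≤ B) (hc : |c| ≤ C) :
    |2*(a*b*c)| ≤ 2*(A*B*C) := by
  have hA := (abs_nonneg a).trans ha
  have hB := (abs_nonneg b).trans hb
  rw [abs_mul, abs_mul, abs_mul, abs_two]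
  exact mul_le_mul_of_nonneg_left
    (mul_le_mul (mul_le_mul ha hb (abs_nonneg b) hA) hc (abs_nonneg c) (mul_nonneg hA hB))
    (by norm_num)

lemma integrable_of_ae_bound' {α : Type*} [MeasurableSpace α] {μ : Measure α} [IsFiniteMeasure μ]
    {h : α → ℝ} (hm : AEStronglyMeasurable h μ) {C : ℝ} (hb : ∀ᵐ x ∂μ, |h x| ≤ C) :
    Integrable h μ :=
  (integrable_const C).mono' hm (by simpa [Real.norm_eq_abs] using hb)

set_option maxHeartbeats 2000000 in
/-- second inequality of Lemma 2 of the paper, assumption set H2.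
With `w = ∫ g² Ψ`, `β = ∫ r Ψ`, `ρₙ = √(n / ln n)`, `Kᵢ = Yᵢ² Ψ(Xᵢ) − w` and
`β̂ = (1/n) Σᵢ Kᵢ 1_{|Kᵢ| ≤ ρₙ}`, one has, with
`M = 16 (E[U⁴] ‖f‖_∞⁴ + ‖g‖_∞⁴) ∫ Ψ² + 2 ‖g‖_∞⁴ (∫ |Ψ|)²`,
`E[(β̂ − β)²] ≤ (M + M²) (ln n)/n`. -/
theorem truncated_coefficient_MSE_H2
    {Ω : Type*} [MeasurableSpace Ω] (P : Measure Ω) [IsProbabilityMeasure P]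
    (d : ℕ) (hd : 1 ≤ d)
    (X : Ω → (Fin d → ℝ)) (U : Ω → ℝ)
    (hXm : Measurable X) (hUm : Measurable U)
    -- X is uniformly distributed on the cube [0,1]^d
    (hXlaw : Measure.map X P = volume.restrict (Set.Icc (0 : Fin d → ℝ) 1))
    -- U independent of X, E[U] = 0, E[U²] = 1, E[U⁴] < ∞
    (hXU : IndepFun X U P)
    (hUint : Integrable U P) (hUmean : ∫ ω, U ω ∂P = 0)
    (hU2int : Integrable (fun ω => (U ω) ^ 2) P)
    (hU2 : ∫ ω, (U ω) ^ 2 ∂P = 1)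
    (hU4 : Integrable (fun ω => (U ω) ^ 4) P)
    -- f, g bounded measurable on the cube, r = f²
    (f g : (Fin d → ℝ) → ℝ) (hfm : Measurable f) (hgm : Measurable g)
    (Cf : ℝ) (hf : ∀ x ∈ Set.Icc (0 : Fin d → ℝ) 1, |f x| ≤ Cf)
    (Cg : ℝ) (hg : ∀ x ∈ Set.Icc (0 : Fin d → ℝ) 1, |g x| ≤ Cg)
    (r : (Fin d → ℝ) → ℝ) (hr : ∀ x, r x = (f x) ^ 2)
    -- the i.i.d. copies (Xᵢ, Uᵢ), i = 1,…,n, of (X, U), and Yᵢ = f(Xᵢ)Uᵢ + g(Xᵢ)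
    (n : ℕ) (hn : 3 ≤ n)
    (Xs : Fin n → Ω → (Fin d → ℝ)) (Us : Fin n → Ω → ℝ)
    (hXsm : ∀ i, Measurable (Xs i)) (hUsm : ∀ i, Measurable (Us i))
    (hiid : iIndepFun (fun i ω => (Xs i ω, Us i ω)) P)
    (hident : ∀ i, IdentDistrib (fun ω => (Xs i ω, Us i ω))
      (fun ω => (X ω, U ω)) P P)
    -- Ψ bounded measurable on the cube
    (Ψ : (Fin d → ℝ) → ℝ) (hΨm : Measurable Ψ)
    (CΨ : ℝ) (hΨ : ∀ x ∈ Set.Icc (0 : Fin d → ℝ) 1, |Ψ x| ≤ CΨ)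
    -- the quantities w, M, ρₙ and the summands Kᵢ
    (w : ℝ) (hw : w = ∫ x in Set.Icc (0 : Fin d → ℝ) 1, (g x) ^ 2 * Ψ x)
    (M : ℝ)
    (hM : M = 16 * ((∫ ω, (U ω) ^ 4 ∂P)
                      * (⨆ x : (Set.Icc (0 : Fin d → ℝ) 1), |f x.1|) ^ 4
                    + (⨆ x : (Set.Icc (0 : Fin d → ℝ) 1), |g x.1|) ^ 4)
              * (∫ x in Set.Icc (0 : Fin d → ℝ) 1, (Ψ x) ^ 2)
            + 2 * (⨆ x : (Set.Icc (0 : Fin d → ℝ) 1), |g x.1|) ^ 4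
                * (∫ x in Set.Icc (0 : Fin d → ℝ) 1, |Ψ x|) ^ 2)
    (ρ : ℝ) (hρ : ρ = Real.sqrt ((n : ℝ) / Real.log n))
    (K : Fin n → Ω → ℝ)
    (hK : ∀ i ω, K i ω = (f (Xs i ω) * Us i ω + g (Xs i ω)) ^ 2 * Ψ (Xs i ω) - w) :
    ∫ ω, ((1 / (n : ℝ)) * (∑ i, if |K i ω| ≤ ρ then K i ω else 0)
          - ∫ x in Set.Icc (0 : Fin d → ℝ) 1, r x * Ψ x) ^ 2 ∂P
      ≤ (M + M ^ 2) * Real.log n / n := by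
  -- notation
  obtain ⟨Q, hQdef⟩ : ∃ Q : Set (Fin d → ℝ), Q = Set.Icc 0 1 := ⟨_, rfl⟩
  rw [← hQdef] at hXlaw hf hg hΨ hw hM ⊢
  have hQm : MeasurableSet Q := by rw [hQdef]; exact measurableSet_Icc
  have hQne : Q.Nonempty := by rw [hQdef]; exact Set.nonempty_Icc.2 zero_le_one
  haveI : Nonempty Q := hQne.to_subtype
  obtain ⟨x0, hx0⟩ := hQne
  -- basic numerics
  have hn0 : (0:ℝ) < (n:ℝ) := by positivity
  have hn3 : (3:ℝ) ≤ (n:ℝ) := by exact_mod_cast hn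
  have hlog1 : 1 ≤ Real.log n := by
    rw [Real.le_log_iff_exp_le hn0]
    calc Real.exp 1 ≤ 2.7182818286 := le_of_lt Real.exp_one_lt_d9
    _ ≤ (n:ℝ) := by linarith
  have hlogpos : 0 < Real.log n := lt_of_lt_of_le one_pos hlog1
  have hρpos : 0 < ρ := by
    rw [hρ]; exact Real.sqrt_pos.2 (div_pos hn0 hlogpos)
  have hρsq : ρ ^ 2 = (n:ℝ) / Real.log n := by
    rw [hρ, Real.sq_sqrt (le_of_lt (div_pos hn0 hlogpos))]
  -- sup bounds
  obtain ⟨F, hFdef⟩ : ∃ F : ℝ, F = ⨆ x : Q, |f x.1| := ⟨_, rfl⟩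
  obtain ⟨G, hGdef⟩ : ∃ G : ℝ, G = ⨆ x : Q, |g x.1| := ⟨_, rfl⟩
  rw [← hFdef, ← hGdef] at hM
  have hFub : ∀ x ∈ Q, |f x| ≤ F := by
    intro x hx
    rw [hFdef]
    exact le_ciSup ⟨Cf, by rintro y ⟨z, rfl⟩; exact hf z.1 z.2⟩ (⟨x, hx⟩ : Q)
  have hGub : ∀ x ∈ Q, |g x| ≤ G := by
    intro x hx
    rw [hGdef]
    exact le_ciSup ⟨Cg, by rintro y ⟨z, rfl⟩; exact hg z.1 z.2⟩ (⟨x, hx⟩ : Q)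
  have hF0 : 0 ≤ F := le_trans (abs_nonneg _) (hFub x0 hx0)
  have hG0 : 0 ≤ G := le_trans (abs_nonneg _) (hGub x0 hx0)
  have hCΨ0 : 0 ≤ CΨ := le_trans (abs_nonneg _) (hΨ x0 hx0)
  -- generic functions (kept opaque; use defining equations only)
  obtain ⟨φ, hφdef⟩ : ∃ φ : (Fin d → ℝ) × ℝ → ℝ,
      φ = fun p => (f p.1 * p.2 + g p.1) ^ 2 * Ψ p.1 - w := ⟨_, rfl⟩
  have hφm : Measurable φ := by
    rw [hφdef]
    have h1 : Measurable fun p : (Fin d → ℝ) × ℝ => f p.1 * p.2 + g p.1 :=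
      ((hfm.comp measurable_fst).mul measurable_snd).add (hgm.comp measurable_fst)
    exact ((h1.pow_const 2).mul (hΨm.comp measurable_fst)).sub measurable_const
  obtain ⟨ψ, hψdef⟩ : ∃ ψ : (Fin d → ℝ) × ℝ → ℝ,
      ψ = fun p => if |φ p| ≤ ρ then φ p else 0 := ⟨_, rfl⟩
  have hψm : Measurable ψ := by
    rw [hψdef]
    exact Measurable.ite (measurableSet_le hφm.abs measurable_const) hφm measurable_const
  have hψabs : ∀ p, |ψ p| ≤ ρ := by
    intro p
    by_cases h : |φ p| ≤ ρ <;> simp [hψdef, h]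
    exact le_of_lt hρpos
  obtain ⟨K0, hK0def⟩ : ∃ K0 : Ω → ℝ, K0 = fun ω => φ (X ω, U ω) := ⟨_, rfl⟩
  obtain ⟨T0, hT0def⟩ : ∃ T0 : Ω → ℝ, T0 = fun ω => ψ (X ω, U ω) := ⟨_, rfl⟩
  have hK0m : Measurable K0 := by rw [hK0def]; exact hφm.comp (hXm.prodMk hUm)
  have hT0m : Measurable T0 := by rw [hT0def]; exact hψm.comp (hXm.prodMk hUm)
  have hK0eq : ∀ ω, K0 ω = (f (X ω) * U ω + g (X ω)) ^ 2 * Ψ (X ω) - w := by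
    intro ω; simp only [hK0def, hφdef]
  -- X lands in the cube a.s.
  have hXae : ∀ᵐ ω ∂P, X ω ∈ Q := by
    have h0 : P (X ⁻¹' Qᶜ) = 0 := by
      have h1 : Measure.map X P Qᶜ = P (X ⁻¹' Qᶜ) := Measure.map_apply hXm hQm.compl
      rw [hXlaw, Measure.restrict_apply hQm.compl] at h1
      simp at h1
      exact h1.symm
    rw [ae_iff]
    exact h0
  have hfa : ∀ᵐ ω ∂P, |f (X ω)| ≤ F := hXae.mono fun ω h => hFub _ h
  have hga : ∀ᵐ ω ∂P, |g (X ω)| ≤ G := hXae.mono fun ω h => hGub _ h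
  have hΨa : ∀ᵐ ω ∂P, |Ψ (X ω)| ≤ CΨ := hXae.mono fun ω h => hΨ _ h
  -- transfer of integrals from P to the cube
  have hmapint : ∀ (h : (Fin d → ℝ) → ℝ), Measurable h →
      ∫ ω, h (X ω) ∂P = ∫ x in Q, h x := by
    intro h hh
    rw [← hXlaw]
    exact (integral_map hXm.aemeasurable hh.aestronglyMeasurable).symm
  -- restriction measure is a probability measure
  haveI hQprob : IsProbabilityMeasure (volume.restrict Q) := by
    rw [← hXlaw]; exact Measure.isProbabilityMeasure_map hXm.aemeasurable
  have hae_restrict : ∀ᵐ x ∂(volume.restrict Q), x ∈ Q := ae_restrict_mem hQm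
  -- integrability of bounded functions of X
  have hintX : ∀ (h : (Fin d → ℝ) → ℝ), Measurable h → ∀ C : ℝ, (∀ x ∈ Q, |h x| ≤ C) →
      Integrable (fun ω => h (X ω)) P := by
    intro h hh C hC
    exact integrable_of_ae_bound' (hh.comp hXm).aestronglyMeasurable
      (hXae.mono fun ω hω => hC _ hω)
  -- integrability on the cube
  have hintQ : ∀ (h : (Fin d → ℝ) → ℝ), Measurable h → ∀ C : ℝ, (∀ x ∈ Q, |h x| ≤ C) →
      Integrable h (volume.restrict Q) := by
    intro h hh C hC
    exact integrable_of_ae_bound' hh.aestronglyMeasurable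
      (hae_restrict.mono fun x hx => hC _ hx)
  -- independence of functions of X and functions of U
  have hindep : ∀ (h : (Fin d → ℝ) → ℝ), Measurable h → ∀ (u : ℝ → ℝ), Measurable u →
      Integrable (fun ω => h (X ω)) P → Integrable (fun ω => u (U ω)) P →
      ∫ ω, h (X ω) * u (U ω) ∂P = (∫ ω, h (X ω) ∂P) * ∫ ω, u (U ω) ∂P := by
    intro h hh u hu hih hiu
    have := (hXU.comp hh hu).integral_mul_eq_mul_integral hih.1 hiu.1
    simpa [Function.comp] using this
  have hEU4 : 0 ≤ ∫ ω, (U ω) ^ 4 ∂P := by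
    apply integral_nonneg; intro ω; positivity
  -- |w| ≤ G² ∫ |Ψ|
  have hIΨabs : Integrable (fun x => |Ψ x|) (volume.restrict Q) :=
    hintQ _ hΨm.abs CΨ (fun x hx => by simpa using hΨ x hx)
  have hwabs : |w| ≤ G ^ 2 * ∫ x in Q, |Ψ x| := by
    rw [hw]
    calc |∫ x in Q, g x ^ 2 * Ψ x| ≤ ∫ x in Q, |g x ^ 2 * Ψ x| := by
          exact
            norm_integral_le_integral_norm (μ := volume.restrict Q) (f := fun x => g x ^ 2 * Ψ x)
    _ ≤ ∫ x in Q, G ^ 2 * |Ψ x| := by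
          apply integral_mono_ae
          · exact (hintQ _ ((hgm.pow_const 2).mul hΨm) (Cg^2*CΨ)
              (fun x hx => sqprod_bound (hg x hx) (hΨ x hx))).abs
          · exact hIΨabs.const_mul _
          · exact hae_restrict.mono fun x hx => sqprod_bound (hGub x hx) (le_refl |Ψ x|)
    _ = G ^ 2 * ∫ x in Q, |Ψ x| := integral_const_mul _ _
  have hIΨabs0 : 0 ≤ ∫ x in Q, |Ψ x| := integral_nonneg fun x => abs_nonneg _
  have hw2 : w ^ 2 ≤ G ^ 4 * (∫ x in Q, |Ψ x|) ^ 2 := by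
    have h1 := sq_le_of_abs_le hwabs
    calc w ^ 2 ≤ (G ^ 2 * ∫ x in Q, |Ψ x|) ^ 2 := h1
    _ = G ^ 4 * (∫ x in Q, |Ψ x|) ^ 2 := by ring
  -- the fourth-power pointwise bound, a.e.
  have hY4bound : ∀ᵐ ω ∂P, ((f (X ω) * U ω + g (X ω)) ^ 2 * Ψ (X ω)) ^ 2
      ≤ 8 * (F ^ 4 * (U ω) ^ 4 + G ^ 4) * (Ψ (X ω)) ^ 2 := by
    filter_upwards [hfa, hga] with ω h1 h2
    have h3 := quartic_bound (f (X ω)) (g (X ω)) F G (U ω) h1 h2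
    have h4 : ((f (X ω) * U ω + g (X ω)) ^ 2 * Ψ (X ω)) ^ 2
        = (f (X ω) * U ω + g (X ω)) ^ 4 * (Ψ (X ω)) ^ 2 := by ring
    rw [h4]
    exact mul_le_mul_of_nonneg_right h3 (sq_nonneg _)
  -- integrability of Y⁴Ψ² and the dominating function
  have hΨX2int : Integrable (fun ω => (Ψ (X ω)) ^ 2) P :=
    hintX _ (hΨm.pow_const 2) (CΨ^2) (fun x hx => by
      rw [abs_pow]; exact pow_le_pow_left₀ (abs_nonneg _) (hΨ x hx) 2)
  have hU4ΨX2int : Integrable (fun ω => (Ψ (X ω)) ^ 2 * (U ω) ^ 4) P := by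
    refine hU4.bdd_mul (c := CΨ^2) ((hΨm.pow_const 2).comp hXm).aestronglyMeasurable ?_
    filter_upwards [hΨa] with ω h1
    rw [Real.norm_eq_abs, abs_pow]
    exact pow_le_pow_left₀ (abs_nonneg _) h1 2
  have hDint : Integrable (fun ω => 8 * (F ^ 4 * (U ω) ^ 4 + G ^ 4) * (Ψ (X ω)) ^ 2) P := by
    have h1 : (fun ω => 8 * (F ^ 4 * (U ω) ^ 4 + G ^ 4) * (Ψ (X ω)) ^ 2)
        = fun ω => 8 * F ^ 4 * ((Ψ (X ω)) ^ 2 * (U ω) ^ 4) + 8 * G ^ 4 * (Ψ (X ω)) ^ 2 := by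
      funext ω; ring
    rw [h1]
    exact (hU4ΨX2int.const_mul _).add (hΨX2int.const_mul _)
  have hY4int : Integrable (fun ω => ((f (X ω) * U ω + g (X ω)) ^ 2 * Ψ (X ω)) ^ 2) P := by
    refine hDint.mono' ?_ ?_
    · exact ((((((hfm.comp hXm).mul hUm).add (hgm.comp hXm)).pow_const 2).mul
        (hΨm.comp hXm)).pow_const 2).aestronglyMeasurable
    · filter_upwards [hY4bound] with ω h1
      rw [Real.norm_eq_abs, abs_of_nonneg (sq_nonneg _)]
      exact h1
  -- ∫ D = 8 (F⁴ E[U⁴] + G⁴) ∫ Ψ²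
  have hEΨX2 : ∫ ω, (Ψ (X ω)) ^ 2 ∂P = ∫ x in Q, (Ψ x) ^ 2 :=
    hmapint _ (hΨm.pow_const 2)
  have hIΨ2 : 0 ≤ ∫ x in Q, (Ψ x) ^ 2 := integral_nonneg fun x => sq_nonneg _
  have hEU4ΨX2 : ∫ ω, (Ψ (X ω)) ^ 2 * (U ω) ^ 4 ∂P
      = (∫ x in Q, (Ψ x) ^ 2) * ∫ ω, (U ω) ^ 4 ∂P := by
    rw [← hEΨX2]
    exact hindep _ (hΨm.pow_const 2) _ (measurable_id.pow_const 4) hΨX2int hU4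
  have hDval : ∫ ω, 8 * (F ^ 4 * (U ω) ^ 4 + G ^ 4) * (Ψ (X ω)) ^ 2 ∂P
      = 8 * (F ^ 4 * (∫ ω, (U ω) ^ 4 ∂P) + G ^ 4) * ∫ x in Q, (Ψ x) ^ 2 := by
    have h1 : (fun ω => 8 * (F ^ 4 * (U ω) ^ 4 + G ^ 4) * (Ψ (X ω)) ^ 2)
        = fun ω => 8 * F ^ 4 * ((Ψ (X ω)) ^ 2 * (U ω) ^ 4) + 8 * G ^ 4 * (Ψ (X ω)) ^ 2 := by
      funext ω; ring
    rw [h1, integral_add ((hU4ΨX2int.const_mul _)) ((hΨX2int.const_mul _)),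
      integral_const_mul, integral_const_mul, hEU4ΨX2, hEΨX2]
    ring
  -- V := E[K0²] is finite and V ≤ M
  have hK0sq_bound : ∀ ω, (K0 ω) ^ 2
      ≤ 2 * ((f (X ω) * U ω + g (X ω)) ^ 2 * Ψ (X ω)) ^ 2 + 2 * w ^ 2 := by
    intro ω
    rw [hK0eq ω]
    nlinarith [sq_nonneg ((f (X ω) * U ω + g (X ω)) ^ 2 * Ψ (X ω) + w)]
  have hK2int : Integrable (fun ω => (K0 ω) ^ 2) P := by
    refine ((hY4int.const_mul 2).add (integrable_const (2 * w ^ 2))).mono'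
      (hK0m.pow_const 2).aestronglyMeasurable ?_
    refine Filter.Eventually.of_forall fun ω => ?_
    rw [Real.norm_eq_abs, abs_of_nonneg (sq_nonneg _)]
    exact hK0sq_bound ω
  obtain ⟨V, hVdef⟩ : ∃ V : ℝ, V = ∫ ω, (K0 ω) ^ 2 ∂P := ⟨_, rfl⟩
  have hV0 : 0 ≤ V := hVdef ▸ integral_nonneg fun ω => sq_nonneg _
  have hVM : V ≤ M := by
    rw [hVdef]
    have h1 : (∫ ω, (K0 ω) ^ 2 ∂P) ≤ ∫ ω, (2 * ((f (X ω) * U ω + g (X ω)) ^ 2 * Ψ (X ω)) ^ 2 + 2 * w ^ 2) ∂P := by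
      apply integral_mono hK2int ((hY4int.const_mul 2).add (integrable_const _))
      intro ω; exact hK0sq_bound ω
    have h2 : ∫ ω, (2 * ((f (X ω) * U ω + g (X ω)) ^ 2 * Ψ (X ω)) ^ 2 + 2 * w ^ 2) ∂P
        = 2 * (∫ ω, ((f (X ω) * U ω + g (X ω)) ^ 2 * Ψ (X ω)) ^ 2 ∂P) + 2 * w ^ 2 := by
      rw [integral_add (hY4int.const_mul 2) (integrable_const _), integral_const_mul,
        integral_const]
      simp
    have h3 : ∫ ω, ((f (X ω) * U ω + g (X ω)) ^ 2 * Ψ (X ω)) ^ 2 ∂P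
        ≤ 8 * (F ^ 4 * (∫ ω, (U ω) ^ 4 ∂P) + G ^ 4) * ∫ x in Q, (Ψ x) ^ 2 := by
      rw [← hDval]
      exact integral_mono_ae hY4int hDint hY4bound
    linarith [h1, h2, h3, hw2, hM,
      mul_le_mul_of_nonneg_right h3 (by norm_num : (0:ℝ) ≤ 2)]
  -- E[K0] = ∫ r Ψ
  have hAint : Integrable (fun ω => (f (X ω)) ^ 2 * Ψ (X ω)) P :=
    hintX _ ((hfm.pow_const 2).mul hΨm) (Cf^2*CΨ)
      (fun x hx => sqprod_bound (hf x hx) (hΨ x hx))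
  have hBint : Integrable (fun ω => 2 * (f (X ω) * g (X ω) * Ψ (X ω))) P :=
    hintX _ (((hfm.mul hgm).mul hΨm).const_mul 2) (2*(Cf*Cg*CΨ))
      (fun x hx => trip_bound (hf x hx) (hg x hx) (hΨ x hx))
  have hCint : Integrable (fun ω => (g (X ω)) ^ 2 * Ψ (X ω)) P :=
    hintX _ ((hgm.pow_const 2).mul hΨm) (Cg^2*CΨ)
      (fun x hx => sqprod_bound (hg x hx) (hΨ x hx))
  have hAU2int : Integrable (fun ω => ((f (X ω)) ^ 2 * Ψ (X ω)) * (U ω) ^ 2) P := by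
    refine hU2int.bdd_mul (c := Cf^2*CΨ)
      (((hfm.pow_const 2).mul hΨm).comp hXm).aestronglyMeasurable ?_
    filter_upwards [hXae] with ω hω
    rw [Real.norm_eq_abs]
    exact sqprod_bound (hf _ hω) (hΨ _ hω)
  have hBUint : Integrable (fun ω => (2 * (f (X ω) * g (X ω) * Ψ (X ω))) * U ω) P := by
    refine hUint.bdd_mul (c := 2*(Cf*Cg*CΨ))
      ((((hfm.mul hgm).mul hΨm).const_mul 2).comp hXm).aestronglyMeasurable ?_
    filter_upwards [hXae] with ω hω
    rw [Real.norm_eq_abs]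
    exact trip_bound (hf _ hω) (hg _ hω) (hΨ _ hω)
  have hK0int : Integrable K0 P := by
    refine ((integrable_const (1:ℝ)).add hK2int).mono' hK0m.aestronglyMeasurable ?_
    exact Filter.Eventually.of_forall fun ω => by
      simpa [Real.norm_eq_abs] using abs_le_one_add_sq (K0 ω)
  have hEK0 : ∫ ω, K0 ω ∂P = ∫ x in Q, r x * Ψ x := by
    have hexp : ∫ ω, K0 ω ∂P = ∫ ω, (((f (X ω)) ^ 2 * Ψ (X ω)) * (U ω) ^ 2
        + ((2 * (f (X ω) * g (X ω) * Ψ (X ω))) * U ω + ((g (X ω)) ^ 2 * Ψ (X ω) - w))) ∂P :=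
      integral_congr_ae (Filter.Eventually.of_forall fun ω => by rw [hK0eq ω]; ring)
    have hCw : Integrable (fun ω => (g (X ω)) ^ 2 * Ψ (X ω) - w) P :=
      hCint.sub (integrable_const w)
    have hBC : Integrable (fun ω => (2 * (f (X ω) * g (X ω) * Ψ (X ω))) * U ω
        + ((g (X ω)) ^ 2 * Ψ (X ω) - w)) P := hBUint.add hCw
    rw [hexp, integral_add hAU2int hBC, integral_add hBUint hCw,
      integral_sub hCint (integrable_const w)]
    have e1 : ∫ ω, ((f (X ω)) ^ 2 * Ψ (X ω)) * (U ω) ^ 2 ∂P = ∫ x in Q, (f x) ^ 2 * Ψ x := by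
      have hu2m : Measurable (fun t : ℝ => t ^ 2) := measurable_id.pow_const 2
      rw [hindep (fun x => f x ^ 2 * Ψ x) ((hfm.pow_const 2).mul hΨm) _ hu2m hAint hU2int]
      have : ∫ ω, (U ω) ^ 2 ∂P = 1 := hU2
      rw [this, mul_one]
      exact hmapint _ ((hfm.pow_const 2).mul hΨm)
    have e2 : ∫ ω, (2 * (f (X ω) * g (X ω) * Ψ (X ω))) * U ω ∂P = 0 := by
      have hu1m : Measurable (fun t : ℝ => t) := measurable_id
      rw [hindep (fun x => 2 * (f x * g x * Ψ x)) (((hfm.mul hgm).mul hΨm).const_mul 2) (fun t => t) hu1m hBint hUint]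
      simp [hUmean]
    have e3 : ∫ ω, (g (X ω)) ^ 2 * Ψ (X ω) ∂P = w := by
      rw [hmapint (fun x => g x ^ 2 * Ψ x) ((hgm.pow_const 2).mul hΨm), hw]
    rw [e1, e2, e3, integral_const]
    simp only [measure_univ, probReal_univ, ENNReal.toReal_one, smul_eq_mul, one_mul]
    have h5 : ∫ x in Q, (f x) ^ 2 * Ψ x = ∫ x in Q, r x * Ψ x := by
      apply integral_congr_ae
      exact Filter.Eventually.of_forall fun x => by simp only [hr]
    linarith [h5]
  -- the truncated variables
  obtain ⟨T, hTdef⟩ : ∃ T : Fin n → Ω → ℝ, T = fun i ω => ψ (Xs i ω, Us i ω) := ⟨_, rfl⟩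
  have hTeq : ∀ i ω, T i ω = ψ (Xs i ω, Us i ω) := by intro i ω; rw [hTdef]
  have hTm : ∀ i, Measurable (T i) := by
    intro i; rw [hTdef]; exact hψm.comp ((hXsm i).prodMk (hUsm i))
  have hTmem : ∀ i, MemLp (T i) 2 P := fun i =>
    MemLp.of_bound (hTm i).aestronglyMeasurable ρ
      (Filter.Eventually.of_forall fun ω => by
        rw [Real.norm_eq_abs, hTeq i ω]; exact hψabs _)
  have hT0mem : MemLp T0 2 P :=
    MemLp.of_bound hT0m.aestronglyMeasurable ρ
      (Filter.Eventually.of_forall fun ω => by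
        rw [Real.norm_eq_abs, hT0def]; exact hψabs _)
  have hT0int : Integrable T0 P := hT0mem.integrable one_le_two
  obtain ⟨μ0, hμ0def⟩ : ∃ μ0 : ℝ, μ0 = ∫ ω, T0 ω ∂P := ⟨_, rfl⟩
  have hTident : ∀ i, IdentDistrib (T i) T0 P P := by
    intro i
    rw [hTdef, hT0def]
    exact (hident i).comp hψm
  have hTint : ∀ i, Integrable (T i) P := fun i => (hTmem i).integrable one_le_two
  have hTmean : ∀ i, ∫ ω, T i ω ∂P = μ0 := fun i => hμ0def ▸ (hTident i).integral_eq
  -- centered variables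
  obtain ⟨Z, hZdef⟩ : ∃ Z : Fin n → Ω → ℝ, Z = fun i ω => T i ω - μ0 := ⟨_, rfl⟩
  have hZeq : ∀ i ω, Z i ω = T i ω - μ0 := by intro i ω; rw [hZdef]
  have hZmem : ∀ i, MemLp (Z i) 2 P := by
    intro i; rw [hZdef]; exact (hTmem i).sub (memLp_const μ0)
  have hZint : ∀ i, Integrable (Z i) P := fun i => (hZmem i).integrable one_le_two
  have hZmean : ∀ i, ∫ ω, Z i ω ∂P = 0 := by
    intro i
    have h1 : ∫ ω, Z i ω ∂P = ∫ ω, (T i ω - μ0) ∂P :=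
      integral_congr_ae (Filter.Eventually.of_forall fun ω => by rw [hZeq])
    rw [h1, integral_sub (hTint i) (integrable_const μ0), hTmean i, integral_const]
    simp
  obtain ⟨T0c, hT0cdef⟩ : ∃ T0c : Ω → ℝ, T0c = fun ω => T0 ω - μ0 := ⟨_, rfl⟩
  have hT0cmem : MemLp T0c 2 P := by rw [hT0cdef]; exact hT0mem.sub (memLp_const μ0)
  have hZident : ∀ i, IdentDistrib (Z i) T0c P P := by
    intro i
    rw [hZdef, hT0cdef, hTdef, hT0def]
    exact (hident i).comp (hψm.sub measurable_const)
  have hZindep : ∀ i j, i ≠ j → IndepFun (Z i) (Z j) P := by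
    intro i j hij
    rw [hZdef, hTdef]
    exact (hiid.indepFun hij).comp (hψm.sub measurable_const) (hψm.sub measurable_const)
  -- variance of the sum
  obtain ⟨v0, hv0def⟩ : ∃ v0 : ℝ, v0 = variance T0c P := ⟨_, rfl⟩
  have hVarSum : variance (∑ i, Z i) P = (n : ℝ) * v0 := by
    rw [IndepFun.variance_sum (fun i _ => hZmem i)
      (fun i _ j _ hij => hZindep i j hij)]
    have h1 : ∀ i : Fin n, variance (Z i) P = v0 := fun i => hv0def ▸ (hZident i).variance_eq
    rw [Finset.sum_congr rfl fun i _ => h1 i]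
    simp [Finset.card_univ, mul_comm]
  -- v0 ≤ E[T0²] ≤ V
  have hT0abs : ∀ ω, |T0 ω| ≤ ρ := by
    intro ω; rw [hT0def]; exact hψabs _
  have hT0sqint : Integrable (fun ω => (T0 ω) ^ 2) P := by
    refine integrable_of_ae_bound' (hT0m.pow_const 2).aestronglyMeasurable
      (C := ρ^2) (Filter.Eventually.of_forall fun ω => ?_)
    rw [abs_of_nonneg (sq_nonneg _)]
    exact sq_le_of_abs_le (hT0abs ω)
  have hT0K0 : ∀ ω, (T0 ω) ^ 2 ≤ (K0 ω) ^ 2 := by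
    intro ω
    simp only [hT0def, hK0def, hψdef]
    by_cases h : |φ (X ω, U ω)| ≤ ρ <;> simp [h]
    positivity
  have hv0V : v0 ≤ V := by
    have h1 : v0 = (∫ ω, (T0c ω) ^ 2 ∂P) - (∫ ω, T0c ω ∂P) ^ 2 := by
      rw [hv0def, variance_eq_sub hT0cmem]
      simp only [Pi.pow_apply]
    have h2 : ∫ ω, T0c ω ∂P = 0 := by
      have h2a : ∫ ω, T0c ω ∂P = ∫ ω, (T0 ω - μ0) ∂P :=
        integral_congr_ae (Filter.Eventually.of_forall fun ω => by simp only [hT0cdef])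
      rw [h2a, integral_sub hT0int (integrable_const μ0), integral_const]
      simp [← hμ0def]
    have hT0csqint : Integrable (fun ω => (T0c ω) ^ 2) P := hT0cmem.integrable_sq
    have h3 : ∫ ω, (T0c ω) ^ 2 ∂P = (∫ ω, (T0 ω) ^ 2 ∂P) - 2 * μ0 * μ0 + μ0 ^ 2 := by
      have hexp : ∫ ω, (T0c ω) ^ 2 ∂P
          = ∫ ω, ((T0 ω) ^ 2 - (2 * μ0) * T0 ω + μ0 ^ 2) ∂P :=
        integral_congr_ae (Filter.Eventually.of_forall fun ω => by
          simp only [hT0cdef]; ring)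
      have hTa : Integrable (fun ω => (T0 ω) ^ 2 - (2 * μ0) * T0 ω) P :=
        hT0sqint.sub (hT0int.const_mul _)
      rw [hexp, integral_add hTa (integrable_const _),
        integral_sub hT0sqint (hT0int.const_mul _), integral_const_mul, integral_const]
      simp [← hμ0def]
    have h4 : ∫ ω, (T0 ω) ^ 2 ∂P ≤ V := hVdef ▸ integral_mono hT0sqint hK2int hT0K0
    have h2' : (∫ ω, T0c ω ∂P) ^ 2 = 0 := by rw [h2]; norm_num
    linarith [h1, h2', h3, h4, sq_nonneg μ0]
  -- the bias term
  have hbias : |μ0 - ∫ x in Q, r x * Ψ x| ≤ V / ρ := by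
    rw [← hEK0]
    have h0 : μ0 - ∫ ω, K0 ω ∂P = ∫ ω, (T0 ω - K0 ω) ∂P := by
      rw [integral_sub hT0int hK0int, hμ0def]
    rw [h0]
    have hptw : ∀ ω, |T0 ω - K0 ω| ≤ (K0 ω) ^ 2 / ρ := by
      intro ω
      simp only [hT0def, hK0def, hψdef]
      by_cases h : |φ (X ω, U ω)| ≤ ρ
      · simp only [if_pos h, sub_self, abs_zero]
        positivity
      · simp only [if_neg h]
        push_neg at h
        rw [zero_sub, abs_neg, le_div_iff₀ hρpos]
        calc |φ (X ω, U ω)| * ρ ≤ |φ (X ω, U ω)| * |φ (X ω, U ω)| :=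
              mul_le_mul_of_nonneg_left (le_of_lt h) (abs_nonneg _)
        _ = (φ (X ω, U ω)) ^ 2 := by rw [← sq_abs]; ring
    calc |∫ ω, (T0 ω - K0 ω) ∂P| ≤ ∫ ω, |T0 ω - K0 ω| ∂P := by
          simpa [Real.norm_eq_abs] using
            norm_integral_le_integral_norm (μ := P) (f := fun ω => T0 ω - K0 ω)
    _ ≤ ∫ ω, (K0 ω) ^ 2 / ρ ∂P := by
          apply integral_mono (hT0int.sub hK0int).abs (hK2int.div_const ρ)
          exact hptw
    _ = V / ρ := by rw [integral_div, ← hVdef]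
  -- rewrite the target integrand
  obtain ⟨βr, hβrdef⟩ : ∃ b : ℝ, b = ∫ x in Q, r x * Ψ x := ⟨_, rfl⟩
  rw [← hβrdef]
  have hrw : ∀ ω, ((1 / (n : ℝ)) * (∑ i, if |K i ω| ≤ ρ then K i ω else 0) - βr)
      = (1 / (n:ℝ)) * (∑ i, Z i ω) + (μ0 - βr) := by
    intro ω
    have h1 : ∀ i : Fin n, (if |K i ω| ≤ ρ then K i ω else 0) = T i ω := by
      intro i
      rw [hTeq i ω]
      simp only [hψdef, hφdef, hK i ω]
    rw [Finset.sum_congr rfl fun i _ => h1 i]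
    have h2 : ∑ i, Z i ω = (∑ i, T i ω) - (n:ℝ) * μ0 := by
      rw [Finset.sum_congr rfl fun i _ => hZeq i ω, Finset.sum_sub_distrib,
        Finset.sum_const, Finset.card_univ, Fintype.card_fin, nsmul_eq_mul]
    rw [h2]
    field_simp
    ring
  have hLHSrw : ∫ ω, ((1 / (n : ℝ)) * (∑ i, if |K i ω| ≤ ρ then K i ω else 0) - βr) ^ 2 ∂P
      = ∫ ω, ((1 / (n:ℝ)) * (∑ i, Z i ω) + (μ0 - βr)) ^ 2 ∂P := by
    apply integral_congr_ae
    exact Filter.Eventually.of_forall fun ω => by simp only [hrw ω]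
  -- expectation of the square
  obtain ⟨W, hWdef⟩ : ∃ W : Ω → ℝ, W = fun ω => (1 / (n:ℝ)) * (∑ i, Z i ω) := ⟨_, rfl⟩
  obtain ⟨c, hcdef⟩ : ∃ c : ℝ, c = μ0 - βr := ⟨_, rfl⟩
  have hSZeq : (∑ i, Z i) = fun ω => ∑ i, Z i ω := by
    funext ω; simp [Finset.sum_apply]
  have hSZmem : MemLp (fun ω => ∑ i, Z i ω) 2 P := by
    have h := memLp_finsetSum' (μ := P) Finset.univ (fun i (_ : i ∈ Finset.univ) => hZmem i)
    rwa [hSZeq] at h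
  have hWmem : MemLp W 2 P := by
    rw [hWdef]
    exact hSZmem.const_mul (1 / (n:ℝ))
  have hWint : Integrable W P := hWmem.integrable one_le_two
  have hWsqint : Integrable (fun ω => (W ω) ^ 2) P := hWmem.integrable_sq
  have hWmean : ∫ ω, W ω ∂P = 0 := by
    have h1 : ∫ ω, W ω ∂P = ∫ ω, ((1 / (n:ℝ)) * ∑ i, Z i ω) ∂P :=
      integral_congr_ae (Filter.Eventually.of_forall fun ω => by simp only [hWdef])
    rw [h1, integral_const_mul, integral_finset_sum _ (fun i _ => hZint i)]
    simp [hZmean]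
  have hSZmean : ∫ ω, (∑ i, Z i ω) ∂P = 0 := by
    rw [integral_finset_sum _ (fun i _ => hZint i)]
    simp [hZmean]
  have hSZsq : ∫ ω, (∑ i, Z i ω) ^ 2 ∂P = (n:ℝ) * v0 := by
    have h1 : variance (∑ i, Z i) P
        = (∫ ω, (∑ i, Z i ω) ^ 2 ∂P) - (∫ ω, (∑ i, Z i ω) ∂P) ^ 2 := by
      rw [hSZeq, variance_eq_sub hSZmem]
      simp only [Pi.pow_apply]
    rw [hVarSum, hSZmean] at h1
    simp at h1
    linarith
  have hWsq : ∫ ω, (W ω) ^ 2 ∂P = v0 / n := by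
    have h1 : ∫ ω, (W ω) ^ 2 ∂P = ∫ ω, ((1 / (n:ℝ))^2 * (∑ i, Z i ω) ^ 2) ∂P :=
      integral_congr_ae (Filter.Eventually.of_forall fun ω => by
        simp only [hWdef]; ring)
    rw [h1, integral_const_mul, hSZsq]
    field_simp
  have hEsq : ∫ ω, (W ω + c) ^ 2 ∂P = v0 / n + c ^ 2 := by
    have h1 : ∫ ω, (W ω + c) ^ 2 ∂P
        = ∫ ω, ((W ω) ^ 2 + (2 * c) * W ω + c ^ 2) ∂P :=
      integral_congr_ae (Filter.Eventually.of_forall fun ω => by ring)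
    have hWa : Integrable (fun ω => (W ω) ^ 2 + (2 * c) * W ω) P :=
      hWsqint.add (hWint.const_mul _)
    rw [h1, integral_add hWa (integrable_const _),
      integral_add hWsqint (hWint.const_mul _), integral_const_mul, hWmean, hWsq,
      integral_const]
    simp
  -- final assembly
  have hcV : c ^ 2 ≤ V ^ 2 * Real.log n / n := by
    have hbias' : |c| ≤ V / ρ := by rw [hcdef, hβrdef]; exact hbias
    have h2 : c ^ 2 ≤ (V / ρ) ^ 2 := sq_le_of_abs_le hbias'
    have h3 : (V / ρ) ^ 2 = V ^ 2 / ρ ^ 2 := by rw [div_pow]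
    have h4 : V ^ 2 / ρ ^ 2 = V ^ 2 * Real.log n / n := by
      rw [hρsq, div_div_eq_mul_div]
    linarith only [h2, h3, h4]
  calc ∫ ω, ((1 / (n : ℝ)) * (∑ i, if |K i ω| ≤ ρ then K i ω else 0) - βr) ^ 2 ∂P
      = v0 / n + c ^ 2 := by
        rw [hLHSrw]
        have h5 : ∀ ω, (1 / (n:ℝ)) * (∑ i, Z i ω) + (μ0 - βr) = W ω + c := by
          intro ω; simp only [hWdef, hcdef]
        rw [integral_congr_ae (Filter.Eventually.of_forall fun ω => by rw [h5 ω])]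
        exact hEsq
  _ ≤ V / n + V ^ 2 * Real.log n / n := by
        have h1 : v0 / n ≤ V / n := by gcongr
        linarith only [h1, hcV]
  _ ≤ (M + M ^ 2) * Real.log n / n := by
        have hVM2 : V ^ 2 ≤ M ^ 2 := pow_le_pow_left₀ hV0 hVM 2
        have hM0 : 0 ≤ M := hV0.trans hVM
        have e1 : V ≤ M * Real.log n :=
          hVM.trans (le_mul_of_one_le_right hM0 hlog1)
        have e2 : V ^ 2 * Real.log n ≤ M ^ 2 * Real.log n :=
          mul_le_mul_of_nonneg_right hVM2 (le_of_lt hlogpos)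
        have hnum : V + V ^ 2 * Real.log n ≤ (M + M ^ 2) * Real.log n := by
          linarith only [e1, e2]
        calc V / n + V ^ 2 * Real.log n / n = (V + V ^ 2 * Real.log n) / n := by ring
        _ ≤ (M + M ^ 2) * Real.log n / n := by gcongr
end
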